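/- Let A be a finite set, v a score matrix with v_{xy} + v_{yx} ≤ 1, and define u_{xy} = v_{xy} if v_{xy} > v_{yx} and u_{xy} = 0 otherwise; w_{xy} = v_{xy} if v_{xy} ≥ v_{yx} and w_{xy} = 0 otherwise. Then for all distinct x, y: u*_{xy} ≤ w*_{xy} ≤ v*_{xy}; moreover, if v*_{xy} > 1/2 then u*_{xy} = w*_{xy} = v*_{xy}, and if v*_{xy} = 1/2 then w*_{xy} = v*_{xy}. -/

import Mathlib

/-- The score of a path (a list of vertices): the minimum of the scores
of its consecutive links. -/
def pathScore {A : Type*} (v : A → A → ℝ) : List A → ℝ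
  | [] => 0
  | [_] => 0
  | [a, b] => v a b
  | a :: b :: c :: l => min (v a b) (pathScore v (b :: c :: l))

/-- `l` is a path from `x` to `y`: a list with at least two entries,
starting at `x` and ending at `y`. -/
def IsPath {A : Type*} (x y : A) (l : List A) : Prop :=
  2 ≤ l.length ∧ l.head? = some x ∧ l.getLast? = some y

/-- The max-min indirect score `v*_{xy}`: the supremum (attained, since the
set of path scores is finite) of path scores over all paths from `x` to `y`. -/
noncomputable def indirectScore {A : Type*} (v : A → A → ℝ) (x y : A) : ℝ :=
  ⨆ l : {l : List A // IsPath x y l}, pathScore v l.1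
theorem pathScore_mem {A : Type*} (v : A → A → ℝ) :
    ∀ l : List A, pathScore v l ∈ insert (0:ℝ) (Set.range fun p : A × A => v p.1 p.2)
  | [] => by simp [pathScore]
  | [a] => by simp [pathScore]
  | [a, b] => by exact Set.mem_insert_of_mem _ ⟨(a, b), rfl⟩
  | a :: b :: c :: l => by
      have h := pathScore_mem v (b :: c :: l)
      rcases min_cases (v a b) (pathScore v (b :: c :: l)) with ⟨h1, -⟩ | ⟨h1, -⟩
      · show min (v a b) (pathScore v (b :: c :: l)) ∈ _
        rw [h1]; exact Set.mem_insert_of_mem _ ⟨(a, b), rfl⟩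
      · show min (v a b) (pathScore v (b :: c :: l)) ∈ _
        rw [h1]; exact h

theorem pathScore_mono {A : Type*} {u v : A → A → ℝ} (h : ∀ a b, u a b ≤ v a b) :
    ∀ l : List A, pathScore u l ≤ pathScore v l
  | [] => le_refl _
  | [a] => le_refl _
  | [a, b] => h a b
  | a :: b :: c :: l => min_le_min (h a b) (pathScore_mono h (b :: c :: l))

theorem indirectScore_spec {A : Type*} [Fintype A] (v : A → A → ℝ) (x y : A) :
    (∃ l, IsPath x y l ∧ pathScore v l = indirectScore v x y) ∧
    ∀ l, IsPath x y l → pathScore v l ≤ indirectScore v x y := by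
  have hne : Nonempty {l : List A // IsPath x y l} := ⟨⟨[x, y], by simp [IsPath]⟩⟩
  set f : {l : List A // IsPath x y l} → ℝ := fun l => pathScore v l.1 with hf
  have hsub : Set.range f ⊆ insert (0:ℝ) (Set.range fun p : A × A => v p.1 p.2) := by
    rintro r ⟨l, rfl⟩; exact pathScore_mem v l.1
  have hfin : (Set.range f).Finite := ((Set.finite_range _).insert 0).subset hsub
  have hbdd : BddAbove (Set.range f) := hfin.bddAbove
  have hmem : sSup (Set.range f) ∈ Set.range f := (Set.range_nonempty f).csSup_mem hfin
  have hiSup : indirectScore v x y = sSup (Set.range f) := rfl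
  constructor
  · obtain ⟨⟨l, hl⟩, hfl⟩ := hmem
    exact ⟨l, hl, by rw [hiSup]; exact hfl⟩
  · intro l hl
    exact le_ciSup hbdd (⟨l, hl⟩ : {l : List A // IsPath x y l})

theorem exists_chain_path {A : Type*} (v : A → A → ℝ) (y : A) :
    ∀ l : List A, ∀ x : A, x ≠ y → IsPath x y l →
      ∃ l', IsPath x y l' ∧ l'.Chain' (· ≠ ·) ∧ pathScore v l ≤ pathScore v l'
  | [], x, hxy, hp => by simp [IsPath] at hp
  | [a], x, hxy, hp => by simp [IsPath] at hp
  | [a, b], x, hxy, hp => by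
      obtain ⟨-, h1, h2⟩ := hp
      simp at h1 h2
      subst h1; subst h2
      exact ⟨[a, b], by simp [IsPath], by simpa [List.Chain'] using hxy, le_refl _⟩
  | a :: b :: c :: l, x, hxy, hp => by
      obtain ⟨-, h1, h2⟩ := hp
      simp at h1
      subst h1
      by_cases hab : a = b
      · subst hab
        have hp' : IsPath a y (a :: c :: l) := by
          refine ⟨by simp, by simp, ?_⟩
          rw [List.getLast?_cons_cons] at h2 ⊢
          exact h2
        obtain ⟨l', hl', hc', hs'⟩ := exists_chain_path v y (a :: c :: l) a hxy hp'
        refine ⟨l', hl', hc', le_trans ?_ hs'⟩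
        show min (v a a) (pathScore v (a :: c :: l)) ≤ _
        exact min_le_right _ _
      · by_cases hby : b = y
        · subst hby
          refine ⟨[a, b], by simp [IsPath], by simpa [List.Chain'] using hab, ?_⟩
          show min (v a b) _ ≤ v a b
          exact min_le_left _ _
        · have hp' : IsPath b y (b :: c :: l) := by
            refine ⟨by simp, by simp, ?_⟩
            rw [List.getLast?_cons_cons] at h2
            exact h2
          obtain ⟨l', hl', hc', hs'⟩ := exists_chain_path v y (b :: c :: l) b hby hp'
          obtain ⟨hlen, hhd, hlast⟩ := hl'
          match l', hlen, hhd, hlast, hc', hs' with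
          | e :: f :: r, hlen, hhd, hlast, hc', hs' =>
            simp at hhd
            subst hhd
            refine ⟨a :: e :: f :: r, ⟨by simp, by simp, ?_⟩, ?_, ?_⟩
            · rw [List.getLast?_cons_cons]
              exact hlast
            · rw [List.Chain', List.isChain_cons_cons]
              exact ⟨hab, hc'⟩
            · show min (v a e) _ ≤ min (v a e) _
              exact min_le_min (le_refl _) hs'
  termination_by l => l.length

theorem pathScore_eq_of_chain {A : Type*} (u v : A → A → ℝ) (m : ℝ)
    (H : ∀ a b : A, a ≠ b → m ≤ v a b → u a b = v a b) :
    ∀ l : List A, l.Chain' (· ≠ ·) → m ≤ pathScore v l → 2 ≤ l.length →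
      pathScore u l = pathScore v l
  | [], _, _, hlen => by simp at hlen
  | [a], _, _, hlen => by simp at hlen
  | [a, b], hc, hm, _ => by
      rw [List.Chain', List.isChain_cons_cons] at hc
      exact H a b hc.1 hm
  | a :: b :: c :: l, hc, hm, _ => by
      rw [List.Chain', List.isChain_cons_cons] at hc
      have hm' : m ≤ min (v a b) (pathScore v (b :: c :: l)) := hm
      rw [le_min_iff] at hm'
      show min (u a b) (pathScore u (b :: c :: l)) = min (v a b) (pathScore v (b :: c :: l))
      rw [H a b hc.1 hm'.1,
        pathScore_eq_of_chain u v m H (b :: c :: l) hc.2 hm'.2 (by simp)]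

theorem stmt17 {A : Type*} [Fintype A] (v u w : A → A → ℝ)
    (hv : ∀ x y : A, 0 ≤ v x y)
    (hbound : ∀ x y : A, x ≠ y → v x y + v y x ≤ 1)
    (hu : ∀ x y : A, u x y = if v y x < v x y then v x y else 0)
    (hw : ∀ x y : A, w x y = if v y x ≤ v x y then v x y else 0)
    (x y : A) (hxy : x ≠ y) :
    indirectScore u x y ≤ indirectScore w x y ∧
    indirectScore w x y ≤ indirectScore v x y ∧
    (1 / 2 < indirectScore v x y →
      indirectScore u x y = indirectScore v x y ∧
      indirectScore w x y = indirectScore v x y) ∧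
    (indirectScore v x y = 1 / 2 → indirectScore w x y = indirectScore v x y) := by
  have huw : ∀ a b, u a b ≤ w a b := by
    intro a b
    rw [hu, hw]
    by_cases h : v b a < v a b
    · rw [if_pos h, if_pos h.le]
    · rw [if_neg h]
      by_cases h' : v b a ≤ v a b
      · rw [if_pos h']; exact hv a b
      · rw [if_neg h']
  have hwv : ∀ a b, w a b ≤ v a b := by
    intro a b
    rw [hw]
    by_cases h : v b a ≤ v a b
    · rw [if_pos h]
    · rw [if_neg h]; exact hv a b
  obtain ⟨⟨lv, hlv, hlvs⟩, hubv⟩ := indirectScore_spec v x y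
  obtain ⟨⟨lu, hlu, hlus⟩, hubu⟩ := indirectScore_spec u x y
  obtain ⟨⟨lw, hlw, hlws⟩, hubw⟩ := indirectScore_spec w x y
  have h1 : indirectScore u x y ≤ indirectScore w x y := by
    rw [← hlus]
    exact le_trans (pathScore_mono huw lu) (hubw lu hlu)
  have h2 : indirectScore w x y ≤ indirectScore v x y := by
    rw [← hlws]
    exact le_trans (pathScore_mono hwv lw) (hubv lw hlw)
  obtain ⟨l₁, hl₁, hc₁, hs₁⟩ := exists_chain_path v y lv x hxy hlv
  have hs₁' : pathScore v l₁ = indirectScore v x y :=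
    le_antisymm (hubv l₁ hl₁) (by rw [← hlvs]; exact hs₁)
  refine ⟨h1, h2, ?_, ?_⟩
  · intro hgt
    have Hu : ∀ a b : A, a ≠ b → indirectScore v x y ≤ v a b → u a b = v a b := by
      intro a b hab hm
      rw [hu]
      rw [if_pos]
      have := hbound b a hab.symm
      linarith
    have key : pathScore u l₁ = pathScore v l₁ :=
      pathScore_eq_of_chain u v _ Hu l₁ hc₁ (by rw [hs₁']) hl₁.1
    have h3 : indirectScore v x y ≤ indirectScore u x y := by
      rw [← hs₁', ← key]
      exact hubu l₁ hl₁
    have h4 : indirectScore u x y = indirectScore v x y :=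
      le_antisymm (le_trans h1 h2) h3
    exact ⟨h4, le_antisymm h2 (by rw [← h4]; exact h1)⟩
  · intro heq
    have Hw : ∀ a b : A, a ≠ b → indirectScore v x y ≤ v a b → w a b = v a b := by
      intro a b hab hm
      rw [hw]
      rw [if_pos]
      have := hbound b a hab.symm
      rw [heq] at hm
      linarith
    have key : pathScore w l₁ = pathScore v l₁ :=
      pathScore_eq_of_chain w v _ Hw l₁ hc₁ (by rw [hs₁']) hl₁.1
    have h3 : indirectScore v x y ≤ indirectScore w x y := by
      rw [← hs₁', ← key]
      exact hubw l₁ hl₁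
    exact le_antisymm h2 h3
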